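/- Let C be the class of axes-aligned ellipses in ℝ², i.e., the class of all sets E_{a,b,c,d} = {(x,y) ∈ ℝ² : a(x−b)² + c(y−d)² = 1} with a, b, c, d ∈ ℝ and a, c > 0. Then C has VC-dimension 4 and Littlestone dimension 4. -/
import Mathlib


/-- A family of sets `C` shatters `Y` if every subset of `Y` is the trace of a member of `C`. -/
def ShattersSet {X : Type*} (C : Set (Set X)) (Y : Set X) : Prop :=
  ∀ Z ⊆ Y, ∃ A ∈ C, A ∩ Y = Z

/-- The leaf `τ` of a binary tree of depth `n` with node labels `t` and leaf label `A`
is well-labeled. -/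
def WellLabeledLeaf {X : Type*} (n : ℕ) (t : (k : ℕ) → (Fin k → Bool) → X)
    (A : Set X) (τ : Fin n → Bool) : Prop :=
  ∀ k : Fin n, (t k.val (fun j : Fin k.val => τ (Fin.castLE k.isLt.le j)) ∈ A) ↔ τ k = true

/-- There is an `(X, C)`-labeled tree of depth `n` all of whose leaves are well-labeled. -/
def HasWellLabeledTree {X : Type*} (C : Set (Set X)) (n : ℕ) : Prop :=
  ∃ (t : (k : ℕ) → (Fin k → Bool) → X) (L : (Fin n → Bool) → Set X),
    (∀ τ, L τ ∈ C) ∧ ∀ τ, WellLabeledLeaf n t (L τ) τ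

/-- The axes-aligned ellipse `{(x,y) : a(x-b)² + c(y-d)² = 1}`. -/
def ellipse (a b c d : ℝ) : Set (ℝ × ℝ) :=
  {p | a * (p.1 - b) ^ 2 + c * (p.2 - d) ^ 2 = 1}

/-- The class of axes-aligned ellipses in `ℝ²`. -/
def ellipses : Set (Set (ℝ × ℝ)) :=
  {s | ∃ a b c d : ℝ, 0 < a ∧ 0 < c ∧ s = ellipse a b c d}

open Matrix in
noncomputable def dpLin {N : ℕ} (w : Fin N → ℝ) : (Fin N → ℝ) →ₗ[ℝ] ℝ where
  toFun u := w ⬝ᵥ u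
  map_add' x y := dotProduct_add w x y
  map_smul' r x := dotProduct_smul r w x |>.symm ▸ rfl

open Matrix in
lemma noTree {X : Type*} {N : ℕ} (v : X → (Fin N → ℝ)) :
    ∀ (n : ℕ) (W : Submodule ℝ (Fin N → ℝ)) (C : Set (Set X)),
      (∀ A ∈ C, ∃ u, u ∈ W ∧ u ≠ 0 ∧ A = {p | v p ⬝ᵥ u = 0}) →
      Module.finrank ℝ W ≤ n → ¬ HasWellLabeledTree C n := by
  intro n
  induction n with
  | zero =>
    intro W C hrep hrk ⟨t, L, hL, hW⟩
    have hbot : W = ⊥ := Submodule.finrank_eq_zero.mp (Nat.le_zero.mp hrk)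
    obtain ⟨u, huW, hu0, -⟩ := hrep _ (hL fun i => i.elim0)
    rw [hbot, Submodule.mem_bot] at huW
    exact hu0 huW
  | succ m ih =>
    intro W C hrep hrk ⟨t, L, hL, hW⟩
    set p : X := t 0 (fun i => i.elim0) with hp
    have ht0 : ∀ f : Fin 0 → Bool, t 0 f = p := fun f => by
      rw [hp]; exact congrArg (t 0) (funext fun i => i.elim0)
    by_cases hcase : ∀ u ∈ W, v p ⬝ᵥ u = 0
    · -- all-false leaf contradicts p being in every set of C
      set τ₀ : Fin (m+1) → Bool := fun _ => false with hτ₀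
      obtain ⟨u, huW, -, hA⟩ := hrep _ (hL τ₀)
      have hpA : p ∈ L τ₀ := by rw [hA]; exact hcase u huW
      have := (hW τ₀ ⟨0, Nat.succ_pos m⟩).mp (by rw [ht0]; exact hpA)
      simp [hτ₀] at this
    · push_neg at hcase
      obtain ⟨u₀, hu₀W, hu₀⟩ := hcase
      set W' : Submodule ℝ (Fin N → ℝ) := W ⊓ LinearMap.ker (dpLin (v p)) with hW'
      have hWlt : W' < W := by
        refine lt_of_le_of_ne inf_le_left (fun h => hu₀ ?_)
        have : u₀ ∈ W' := h ▸ hu₀W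
        exact this.2
      have hrk' : Module.finrank ℝ W' ≤ m := by
        have := Submodule.finrank_lt_finrank_of_lt hWlt
        omega
      set C' : Set (Set X) := {A | A ∈ C ∧ p ∈ A} with hC'
      have hrep' : ∀ A ∈ C', ∃ u, u ∈ W' ∧ u ≠ 0 ∧ A = {q | v q ⬝ᵥ u = 0} := by
        rintro A ⟨hAC, hpA⟩
        obtain ⟨u, huW, hu0, hA⟩ := hrep A hAC
        refine ⟨u, ⟨huW, ?_⟩, hu0, hA⟩
        rw [hA] at hpA
        exact hpA
      refine ih W' C' hrep' hrk' ⟨fun k σ => t (k+1) (Fin.cons true σ),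
        fun σ => L (Fin.cons true σ), ?_, ?_⟩
      · intro σ
        refine ⟨hL _, ?_⟩
        have := (hW (Fin.cons true σ) ⟨0, Nat.succ_pos m⟩).mpr (by simp [Fin.cons])
        rwa [ht0] at this
      · intro σ k
        have key := hW (Fin.cons true σ) k.succ
        have harg : (fun j : Fin k.succ.val => (Fin.cons true σ : Fin (m+1) → Bool)
              (Fin.castLE k.succ.isLt.le j))
            = Fin.cons true (fun j : Fin k.val => σ (Fin.castLE k.isLt.le j)) := by
          funext j
          refine Fin.cases ?_ (fun i => ?_) j
          · rfl
          · simp only [Fin.cons_succ]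
            have h1 : Fin.castLE k.succ.isLt.le i.succ
                = (Fin.castLE k.isLt.le i).succ := rfl
            rw [h1, Fin.cons_succ]
        rw [harg, Fin.cons_succ] at key
        exact key
noncomputable def featMap (p : ℝ × ℝ) : Fin 5 → ℝ :=
  ![p.1 ^ 2, p.1, p.2 ^ 2, p.2, 1]

open Matrix in
lemma ellipse_rep : ∀ A ∈ ellipses, ∃ u, u ∈ (⊤ : Submodule ℝ (Fin 5 → ℝ)) ∧ u ≠ 0 ∧
    A = {p | featMap p ⬝ᵥ u = 0} := by
  rintro A ⟨a, b, c, d, ha, hc, rfl⟩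
  refine ⟨![a, -2*a*b, c, -2*c*d, a*b^2 + c*d^2 - 1], trivial, ?_, ?_⟩
  · intro h
    have := congrFun h 0
    simp at this
    exact ha.ne' this
  · ext ⟨x, y⟩
    simp only [ellipse, Set.mem_setOf_eq, featMap, dotProduct, Fin.sum_univ_five,
      Matrix.cons_val_zero, Matrix.cons_val_one, Matrix.cons_val_two, Matrix.cons_val_three,
      Matrix.cons_val_four, Matrix.head_cons, Matrix.tail_cons]
    constructor <;> intro h <;> nlinarith [h]

lemma no_tree_five : ∀ n : ℕ, 5 ≤ n → ¬ HasWellLabeledTree ellipses n := by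
  intro n hn
  refine noTree featMap n ⊤ ellipses ellipse_rep ?_
  rw [finrank_top, Module.finrank_fintype_fun_eq_card]
  simpa using hn
lemma shatters_mono {X : Type*} {C : Set (Set X)} {Y Y' : Set X}
    (h : ShattersSet C Y) (hsub : Y' ⊆ Y) : ShattersSet C Y' := by
  intro Z hZ
  obtain ⟨A, hA, hint⟩ := h Z (hZ.trans hsub)
  refine ⟨A, hA, ?_⟩
  have : A ∩ Y' = (A ∩ Y) ∩ Y' := by rw [Set.inter_assoc, Set.inter_eq_self_of_subset_right hsub]
  rw [this, hint, Set.inter_eq_self_of_subset_left hZ]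

lemma hasTree_of_shatters {X : Type*} [Inhabited X] {C : Set (Set X)} {Y : Finset X} {n : ℕ}
    (hcard : Y.card = n) (hsh : ShattersSet C ↑Y) : HasWellLabeledTree C n := by
  classical
  let e := Y.equivFinOfCardEq hcard
  set y : Fin n → X := fun i => (e.symm i : X) with hy
  have hyY : ∀ i, y i ∈ Y := fun i => (e.symm i).2
  have hyinj : Function.Injective y := fun i j hij => by
    have : e.symm i = e.symm j := Subtype.ext hij
    simpa using congrArg e this
  have hZsub : ∀ τ : Fin n → Bool, (y '' {i | τ i = true}) ⊆ ↑Y := by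
    rintro τ x ⟨i, -, rfl⟩; exact hyY i
  choose A hAC hAint using fun τ : Fin n → Bool => hsh (y '' {i | τ i = true}) (hZsub τ)
  refine ⟨fun k σ => if h : k < n then y ⟨k, h⟩ else default, A, hAC, ?_⟩
  intro τ k
  have ht : (if h : (k : ℕ) < n then y ⟨(k : ℕ), h⟩ else default) = y k := by
    rw [dif_pos k.isLt]
  simp only [ht]
  constructor
  · intro hmem
    have : y k ∈ A τ ∩ ↑Y := ⟨hmem, hyY k⟩
    rw [hAint τ] at this
    obtain ⟨i, hi, hik⟩ := this
    rwa [← hyinj hik]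
  · intro hk
    have : y k ∈ A τ ∩ ↑Y := by rw [hAint τ]; exact ⟨k, hk, rfl⟩
    exact this.1

noncomputable def P1 : ℝ × ℝ := (1, 0)
noncomputable def P2 : ℝ × ℝ := (-1, 0)
noncomputable def P3 : ℝ × ℝ := (0, 1)
noncomputable def P4 : ℝ × ℝ := (0, -1)

noncomputable def Y4 : Finset (ℝ × ℝ) := {P1, P2, P3, P4}

lemma Y4_card : Y4.card = 4 := by
  rw [Y4, Finset.card_insert_of_notMem (by norm_num [P1, P2, P3, P4, Prod.ext_iff]),
    Finset.card_insert_of_notMem (by norm_num [P2, P3, P4, Prod.ext_iff]),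
    Finset.card_insert_of_notMem (by norm_num [P3, P4, Prod.ext_iff]),
    Finset.card_singleton]

lemma mem_Y4 {q : ℝ × ℝ} (hq : q ∈ (↑Y4 : Set (ℝ × ℝ))) :
    q = P1 ∨ q = P2 ∨ q = P3 ∨ q = P4 := by
  simpa [Y4] using hq

lemma ell_case {Z : Set (ℝ × ℝ)} (hZ : Z ⊆ ↑Y4) (a b c d : ℝ) (ha : 0 < a) (hc : 0 < c)
    (h1 : P1 ∈ ellipse a b c d ↔ P1 ∈ Z) (h2 : P2 ∈ ellipse a b c d ↔ P2 ∈ Z)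
    (h3 : P3 ∈ ellipse a b c d ↔ P3 ∈ Z) (h4 : P4 ∈ ellipse a b c d ↔ P4 ∈ Z) :
    ∃ A ∈ ellipses, A ∩ ↑Y4 = Z := by
  refine ⟨ellipse a b c d, ⟨a, b, c, d, ha, hc, rfl⟩, ?_⟩
  ext q
  constructor
  · rintro ⟨hqA, hqY⟩
    rcases mem_Y4 hqY with rfl | rfl | rfl | rfl
    · exact h1.mp hqA
    · exact h2.mp hqA
    · exact h3.mp hqA
    · exact h4.mp hqA
  · intro hqZ
    have hqY := hZ hqZ
    refine ⟨?_, hqY⟩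
    rcases mem_Y4 hqY with rfl | rfl | rfl | rfl
    · exact h1.mpr hqZ
    · exact h2.mpr hqZ
    · exact h3.mpr hqZ
    · exact h4.mpr hqZ

lemma shatters_Y4 : ShattersSet ellipses ↑Y4 := by
  intro Z hZ
  by_cases h1 : P1 ∈ Z <;> by_cases h2 : P2 ∈ Z <;> by_cases h3 : P3 ∈ Z <;> by_cases h4 : P4 ∈ Z
  · -- {1,2,3,4}
    exact ell_case hZ 1 0 1 0 (by norm_num) (by norm_num)
      (iff_of_true (by norm_num [ellipse, P1]) h1) (iff_of_true (by norm_num [ellipse, P2]) h2)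
      (iff_of_true (by norm_num [ellipse, P3]) h3) (iff_of_true (by norm_num [ellipse, P4]) h4)
  · -- {1,2,3}
    exact ell_case hZ (8/9) 0 (16/9) (1/4) (by norm_num) (by norm_num)
      (iff_of_true (by norm_num [ellipse, P1]) h1) (iff_of_true (by norm_num [ellipse, P2]) h2)
      (iff_of_true (by norm_num [ellipse, P3]) h3) (iff_of_false (by norm_num [ellipse, P4]) h4)
  · -- {1,2,4}
    exact ell_case hZ (8/9) 0 (16/9) (-1/4) (by norm_num) (by norm_num)
      (iff_of_true (by norm_num [ellipse, P1]) h1) (iff_of_true (by norm_num [ellipse, P2]) h2)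
      (iff_of_false (by norm_num [ellipse, P3]) h3) (iff_of_true (by norm_num [ellipse, P4]) h4)
  · -- {1,2}
    exact ell_case hZ 1 0 2 0 (by norm_num) (by norm_num)
      (iff_of_true (by norm_num [ellipse, P1]) h1) (iff_of_true (by norm_num [ellipse, P2]) h2)
      (iff_of_false (by norm_num [ellipse, P3]) h3) (iff_of_false (by norm_num [ellipse, P4]) h4)
  · -- {1,3,4}
    exact ell_case hZ (16/9) (1/4) (8/9) 0 (by norm_num) (by norm_num)
      (iff_of_true (by norm_num [ellipse, P1]) h1) (iff_of_false (by norm_num [ellipse, P2]) h2)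
      (iff_of_true (by norm_num [ellipse, P3]) h3) (iff_of_true (by norm_num [ellipse, P4]) h4)
  · -- {1,3}
    exact ell_case hZ 1 1 1 1 (by norm_num) (by norm_num)
      (iff_of_true (by norm_num [ellipse, P1]) h1) (iff_of_false (by norm_num [ellipse, P2]) h2)
      (iff_of_true (by norm_num [ellipse, P3]) h3) (iff_of_false (by norm_num [ellipse, P4]) h4)
  · -- {1,4}
    exact ell_case hZ 1 1 1 (-1) (by norm_num) (by norm_num)
      (iff_of_true (by norm_num [ellipse, P1]) h1) (iff_of_false (by norm_num [ellipse, P2]) h2)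
      (iff_of_false (by norm_num [ellipse, P3]) h3) (iff_of_true (by norm_num [ellipse, P4]) h4)
  · -- {1}
    exact ell_case hZ 1 2 1 0 (by norm_num) (by norm_num)
      (iff_of_true (by norm_num [ellipse, P1]) h1) (iff_of_false (by norm_num [ellipse, P2]) h2)
      (iff_of_false (by norm_num [ellipse, P3]) h3) (iff_of_false (by norm_num [ellipse, P4]) h4)
  · -- {2,3,4}
    exact ell_case hZ (16/9) (-1/4) (8/9) 0 (by norm_num) (by norm_num)
      (iff_of_false (by norm_num [ellipse, P1]) h1) (iff_of_true (by norm_num [ellipse, P2]) h2)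
      (iff_of_true (by norm_num [ellipse, P3]) h3) (iff_of_true (by norm_num [ellipse, P4]) h4)
  · -- {2,3}
    exact ell_case hZ 1 (-1) 1 1 (by norm_num) (by norm_num)
      (iff_of_false (by norm_num [ellipse, P1]) h1) (iff_of_true (by norm_num [ellipse, P2]) h2)
      (iff_of_true (by norm_num [ellipse, P3]) h3) (iff_of_false (by norm_num [ellipse, P4]) h4)
  · -- {2,4}
    exact ell_case hZ 1 (-1) 1 (-1) (by norm_num) (by norm_num)
      (iff_of_false (by norm_num [ellipse, P1]) h1) (iff_of_true (by norm_num [ellipse, P2]) h2)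
      (iff_of_false (by norm_num [ellipse, P3]) h3) (iff_of_true (by norm_num [ellipse, P4]) h4)
  · -- {2}
    exact ell_case hZ 1 (-2) 1 0 (by norm_num) (by norm_num)
      (iff_of_false (by norm_num [ellipse, P1]) h1) (iff_of_true (by norm_num [ellipse, P2]) h2)
      (iff_of_false (by norm_num [ellipse, P3]) h3) (iff_of_false (by norm_num [ellipse, P4]) h4)
  · -- {3,4}
    exact ell_case hZ 2 0 1 0 (by norm_num) (by norm_num)
      (iff_of_false (by norm_num [ellipse, P1]) h1) (iff_of_false (by norm_num [ellipse, P2]) h2)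
      (iff_of_true (by norm_num [ellipse, P3]) h3) (iff_of_true (by norm_num [ellipse, P4]) h4)
  · -- {3}
    exact ell_case hZ 1 0 1 2 (by norm_num) (by norm_num)
      (iff_of_false (by norm_num [ellipse, P1]) h1) (iff_of_false (by norm_num [ellipse, P2]) h2)
      (iff_of_true (by norm_num [ellipse, P3]) h3) (iff_of_false (by norm_num [ellipse, P4]) h4)
  · -- {4}
    exact ell_case hZ 1 0 1 (-2) (by norm_num) (by norm_num)
      (iff_of_false (by norm_num [ellipse, P1]) h1) (iff_of_false (by norm_num [ellipse, P2]) h2)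
      (iff_of_false (by norm_num [ellipse, P3]) h3) (iff_of_true (by norm_num [ellipse, P4]) h4)
  · -- ∅
    exact ell_case hZ 1 10 1 10 (by norm_num) (by norm_num)
      (iff_of_false (by norm_num [ellipse, P1]) h1) (iff_of_false (by norm_num [ellipse, P2]) h2)
      (iff_of_false (by norm_num [ellipse, P3]) h3) (iff_of_false (by norm_num [ellipse, P4]) h4)
/-- The class of axes-aligned ellipses in `ℝ²` has VC-dimension `4` and
Littlestone dimension `4`. -/
theorem statement19 :
    ((∃ Y : Finset (ℝ × ℝ), Y.card = 4 ∧ ShattersSet ellipses ↑Y) ∧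
      (∀ Y : Finset (ℝ × ℝ), ShattersSet ellipses ↑Y → Y.card ≤ 4)) ∧
    (HasWellLabeledTree ellipses 4 ∧
      (∀ n : ℕ, 5 ≤ n → ¬ HasWellLabeledTree ellipses n)) := by
  have hInh : Inhabited (ℝ × ℝ) := ⟨(0, 0)⟩
  refine ⟨⟨⟨Y4, Y4_card, shatters_Y4⟩, ?_⟩, hasTree_of_shatters Y4_card shatters_Y4,
    no_tree_five⟩
  intro Y hY
  by_contra hcard
  push_neg at hcard
  obtain ⟨Y', hY'sub, hY'card⟩ := Finset.exists_subset_card_eq (show 5 ≤ Y.card from hcard)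
  have hsh' : ShattersSet ellipses ↑Y' :=
    shatters_mono hY (by exact_mod_cast hY'sub)
  exact no_tree_five 5 le_rfl (hasTree_of_shatters hY'card hsh')
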